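/- Composition of a controlled path with a C² function: Let 2 < p < 3, ω a superadditive nonnegative function on {0 ≤ s ≤ t ≤ 1}, and X : {0 ≤ s ≤ t ≤ 1} → ℝ^d with |X_{st}| ≤ ω(s,t)^{1/p}. Let a : [0,1] → ℝⁿ and a′ : [0,1] → L(ℝ^d, ℝⁿ) satisfy |a_t − a_s| ≤ A ω(s,t)^{1/p}, |a′_t − a′_s| ≤ A′ ω(s,t)^{1/p}, sup_t |a′_t| ≤ M, and |a_t − a_s − a′_s X_{st}| ≤ B ω(s,t)^{2/p} for all s ≤ t. Let f : ℝⁿ → ℝ^m be twice continuously differentiable with first and second derivatives bounded by L. Then for all 0 ≤ s ≤ t ≤ 1: (i) |f(a_t) − f(a_s) − Df(a_s)[a′_s X_{st}]| ≤ L (B + A²) ω(s,t)^{2/p}, and (ii) |Df(a_t) ∘ a′_t − Df(a_s) ∘ a′_s| ≤ L (A′ + A M) ω(s,t)^{1/p} (operator norm in L(ℝ^d, ℝ^m)). In particular (f(a), Df(a) ∘ a′) is a path controlled by X. -/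

import Mathlib

/-- **Composition of a controlled path with a `C²` function.** Let `(a, a')` be a path
controlled by `X` (with constants `A, A', M, B` as below) and `f` of class `C²` with first and
second derivatives bounded by `L`. Then `(f(a), Df(a) ∘ a')` is a path controlled by `X`:
(i) `|f(a_t) - f(a_s) - Df(a_s)[a'_s X_{st}]| ≤ L (B + A²) ω(s,t)^{2/p}` and
(ii) `|Df(a_t) ∘ a'_t - Df(a_s) ∘ a'_s| ≤ L (A' + A M) ω(s,t)^{1/p}`. -/
theorem controlled_path_composition
    (p : ℝ) (hp1 : 2 < p) (hp2 : p < 3) (d n m : ℕ)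
    (ω : ℝ → ℝ → ℝ)
    (hω_nonneg : ∀ s t : ℝ, 0 ≤ s → s ≤ t → t ≤ 1 → 0 ≤ ω s t)
    (hω_super : ∀ s u t : ℝ, 0 ≤ s → s ≤ u → u ≤ t → t ≤ 1 → ω s u + ω u t ≤ ω s t)
    (X : ℝ → ℝ → (Fin d → ℝ))
    (hXb : ∀ s t : ℝ, 0 ≤ s → s ≤ t → t ≤ 1 → ‖X s t‖ ≤ ω s t ^ (1 / p))
    (A A' M B L : ℝ)
    (a : ℝ → (Fin n → ℝ)) (a' : ℝ → (Fin d → ℝ) →L[ℝ] (Fin n → ℝ))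
    (ha : ∀ s t : ℝ, 0 ≤ s → s ≤ t → t ≤ 1 → ‖a t - a s‖ ≤ A * ω s t ^ (1 / p))
    (ha' : ∀ s t : ℝ, 0 ≤ s → s ≤ t → t ≤ 1 → ‖a' t - a' s‖ ≤ A' * ω s t ^ (1 / p))
    (hM : ∀ t : ℝ, 0 ≤ t → t ≤ 1 → ‖a' t‖ ≤ M)
    (hB : ∀ s t : ℝ, 0 ≤ s → s ≤ t → t ≤ 1 →
      ‖a t - a s - a' s (X s t)‖ ≤ B * ω s t ^ (2 / p))
    (f : (Fin n → ℝ) → (Fin m → ℝ)) (hf : ContDiff ℝ 2 f)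
    (hf1 : ∀ x, ‖fderiv ℝ f x‖ ≤ L)
    (hf2 : ∀ x, ‖iteratedFDeriv ℝ 2 f x‖ ≤ L) :
    ∀ s t : ℝ, 0 ≤ s → s ≤ t → t ≤ 1 →
      ‖f (a t) - f (a s) - fderiv ℝ f (a s) (a' s (X s t))‖ ≤
          L * (B + A ^ 2) * ω s t ^ (2 / p) ∧
      ‖(fderiv ℝ f (a t)).comp (a' t) - (fderiv ℝ f (a s)).comp (a' s)‖ ≤
          L * (A' + A * M) * ω s t ^ (1 / p) := by
  have hL : 0 ≤ L := le_trans (norm_nonneg _) (hf1 0)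
  have hfd : Differentiable ℝ f := hf.differentiable (by norm_num)
  have hfd2 : Differentiable ℝ (fderiv ℝ f) :=
    (hf.fderiv_right (m := 1) (by norm_num)).differentiable one_ne_zero
  -- second derivative bound
  have h2 : ∀ x, ‖fderiv ℝ (fderiv ℝ f) x‖ ≤ L := by
    intro x
    refine ContinuousLinearMap.opNorm_le_bound _ hL (fun v => ?_)
    refine ContinuousLinearMap.opNorm_le_bound _ (by positivity) (fun w => ?_)
    have : fderiv ℝ (fderiv ℝ f) x v w = iteratedFDeriv ℝ 2 f x ![v, w] := by
      rw [iteratedFDeriv_two_apply]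
      simp
    rw [this]
    calc ‖iteratedFDeriv ℝ 2 f x ![v, w]‖
        ≤ ‖iteratedFDeriv ℝ 2 f x‖ * ∏ i, ‖(![v, w]) i‖ :=
          ContinuousMultilinearMap.le_opNorm _ _
      _ = ‖iteratedFDeriv ℝ 2 f x‖ * (‖v‖ * ‖w‖) := by
          rw [Fin.prod_univ_two]; simp
      _ ≤ L * (‖v‖ * ‖w‖) := by
          apply mul_le_mul_of_nonneg_right (hf2 x) (by positivity)
      _ = L * ‖v‖ * ‖w‖ := by ring
  -- Lipschitz property of fderiv f
  have hlip : ∀ x y : (Fin n → ℝ), ‖fderiv ℝ f y - fderiv ℝ f x‖ ≤ L * ‖y - x‖ := by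
    intro x y
    exact Convex.norm_image_sub_le_of_norm_fderiv_le
      (fun z _ => hfd2 z) (fun z _ => h2 z) convex_univ (Set.mem_univ x) (Set.mem_univ y)
  intro s t hs hst ht1
  have hωn : 0 ≤ ω s t := hω_nonneg s t hs hst ht1
  have hω1 : (0:ℝ) ≤ ω s t ^ (1 / p) := Real.rpow_nonneg hωn _
  have hω2 : (0:ℝ) ≤ ω s t ^ (2 / p) := Real.rpow_nonneg hωn _
  have hωsq : ω s t ^ (1 / p) * ω s t ^ (1 / p) = ω s t ^ (2 / p) := by
    rw [show (2:ℝ)/p = 1/p + 1/p by ring,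
      Real.rpow_add' hωn (by positivity : (0:ℝ) < 1/p + 1/p).ne']
  have hMnn : 0 ≤ M := le_trans (norm_nonneg _) (hM 0 le_rfl zero_le_one)
  have haa := ha s t hs hst ht1
  have hA1 : 0 ≤ A * ω s t ^ (1 / p) := le_trans (norm_nonneg _) haa
  set u := a s with hu
  set v := a t with hv
  constructor
  · -- Taylor estimate: ‖f v - f u - Df(u)(v - u)‖ ≤ (L * ‖v - u‖) * ‖v - u‖
    have htaylor : ‖f v - f u - (fderiv ℝ f u) (v - u)‖ ≤ (L * ‖v - u‖) * ‖v - u‖ := by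
      refine Convex.norm_image_sub_le_of_norm_fderiv_le' (f := f) (φ := fderiv ℝ f u)
        (s := segment ℝ u v) (fun z _ => hfd z) (fun z hz => ?_) (convex_segment u v)
        (left_mem_segment ℝ u v) (right_mem_segment ℝ u v)
      calc ‖fderiv ℝ f z - fderiv ℝ f u‖ ≤ L * ‖z - u‖ := hlip u z
        _ ≤ L * ‖v - u‖ := by
            apply mul_le_mul_of_nonneg_left _ hL
            have hd := dist_add_dist_of_mem_segment hz
            calc ‖z - u‖ = dist u z := by rw [dist_eq_norm, norm_sub_rev]
              _ ≤ dist u v := le_trans (le_add_of_nonneg_right dist_nonneg) hd.le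
              _ = ‖v - u‖ := by rw [dist_eq_norm, norm_sub_rev]
    have key : f v - f u - fderiv ℝ f u (a' s (X s t)) =
        (f v - f u - fderiv ℝ f u (v - u)) + fderiv ℝ f u (v - u - a' s (X s t)) := by
      simp only [map_sub]; abel
    rw [key]
    have h1 : ‖f v - f u - (fderiv ℝ f u) (v - u)‖ ≤ L * A ^ 2 * ω s t ^ (2 / p) := by
      refine htaylor.trans ?_
      calc L * ‖v - u‖ * ‖v - u‖ ≤ L * (A * ω s t ^ (1 / p)) * (A * ω s t ^ (1 / p)) := by
            apply mul_le_mul (mul_le_mul_of_nonneg_left haa hL) haa (norm_nonneg _)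
              (by positivity)
        _ = L * A ^ 2 * (ω s t ^ (1 / p) * ω s t ^ (1 / p)) := by ring
        _ = L * A ^ 2 * ω s t ^ (2 / p) := by rw [hωsq]
    have h2' : ‖fderiv ℝ f u (v - u - a' s (X s t))‖ ≤ L * B * ω s t ^ (2 / p) := by
      calc ‖fderiv ℝ f u (v - u - a' s (X s t))‖
          ≤ ‖fderiv ℝ f u‖ * ‖v - u - a' s (X s t)‖ := ContinuousLinearMap.le_opNorm _ _
        _ ≤ L * (B * ω s t ^ (2 / p)) := by
            apply mul_le_mul (hf1 u) (hB s t hs hst ht1) (norm_nonneg _) hL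
        _ = L * B * ω s t ^ (2 / p) := by ring
    calc ‖(f v - f u - (fderiv ℝ f u) (v - u)) + fderiv ℝ f u (v - u - a' s (X s t))‖
        ≤ ‖f v - f u - (fderiv ℝ f u) (v - u)‖ + ‖fderiv ℝ f u (v - u - a' s (X s t))‖ :=
          norm_add_le _ _
      _ ≤ L * A ^ 2 * ω s t ^ (2 / p) + L * B * ω s t ^ (2 / p) := add_le_add h1 h2'
      _ = L * (B + A ^ 2) * ω s t ^ (2 / p) := by ring
  · have key : (fderiv ℝ f v).comp (a' t) - (fderiv ℝ f u).comp (a' s) =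
        (fderiv ℝ f v - fderiv ℝ f u).comp (a' t) + (fderiv ℝ f u).comp (a' t - a' s) := by
      ext w
      simp
    rw [key]
    have h1 : ‖(fderiv ℝ f v - fderiv ℝ f u).comp (a' t)‖ ≤ L * (A * M) * ω s t ^ (1 / p) := by
      calc ‖(fderiv ℝ f v - fderiv ℝ f u).comp (a' t)‖
          ≤ ‖fderiv ℝ f v - fderiv ℝ f u‖ * ‖a' t‖ := ContinuousLinearMap.opNorm_comp_le _ _
        _ ≤ (L * (A * ω s t ^ (1 / p))) * M := by
            apply mul_le_mul _ (hM t (hs.trans hst) ht1) (norm_nonneg _) (by positivity)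
            exact (hlip u v).trans (mul_le_mul_of_nonneg_left haa hL)
        _ = L * (A * M) * ω s t ^ (1 / p) := by ring
    have h2' : ‖(fderiv ℝ f u).comp (a' t - a' s)‖ ≤ L * A' * ω s t ^ (1 / p) := by
      calc ‖(fderiv ℝ f u).comp (a' t - a' s)‖
          ≤ ‖fderiv ℝ f u‖ * ‖a' t - a' s‖ := ContinuousLinearMap.opNorm_comp_le _ _
        _ ≤ L * (A' * ω s t ^ (1 / p)) := by
            apply mul_le_mul (hf1 u) (ha' s t hs hst ht1) (norm_nonneg _) hL
        _ = L * A' * ω s t ^ (1 / p) := by ring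
    calc ‖(fderiv ℝ f v - fderiv ℝ f u).comp (a' t) + (fderiv ℝ f u).comp (a' t - a' s)‖
        ≤ ‖(fderiv ℝ f v - fderiv ℝ f u).comp (a' t)‖ + ‖(fderiv ℝ f u).comp (a' t - a' s)‖ :=
          norm_add_le _ _
      _ ≤ L * (A * M) * ω s t ^ (1 / p) + L * A' * ω s t ^ (1 / p) := add_le_add h1 h2'
      _ = L * (A' + A * M) * ω s t ^ (1 / p) := by ring
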